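/- For a graph G on n vertices in which every vertex has at most D vertices (including itself) within graph distance ⌈log₂ W⌉ + 1, where W ≥ D, every acquisition protocol leaves a residual set where each vertex holds weight at most W; consequently a_t(G) ≥ n / W. -/

import Mathlib

/-- A total acquisition move: all the weight of `u` is moved to an adjacent
vertex `v`, provided `v` carries at least as much weight as `u`. -/
def AcqMove {V : Type*} [DecidableEq V] (G : SimpleGraph V) (w w' : V → ℕ) : Prop :=
  ∃ u v, G.Adj u v ∧ 0 < w u ∧ w u ≤ w v ∧
    w' = Function.update (Function.update w v (w v + w u)) u 0

/-- Reachability by a finite sequence of total acquisition moves. -/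
def AcqReach {V : Type*} [DecidableEq V] (G : SimpleGraph V) : (V → ℕ) → (V → ℕ) → Prop :=
  Relation.ReflTransGen (AcqMove G)

/-- No total acquisition move is available from `w`. -/
def AcqMaximal {V : Type*} [DecidableEq V] (G : SimpleGraph V) (w : V → ℕ) : Prop :=
  ∀ w', ¬ AcqMove G w w'

/-- The total acquisition number: minimum number of vertices with positive
weight after a maximal sequence of total acquisition moves starting from the
all-ones weight function. -/
noncomputable def totalAcq {V : Type*} [DecidableEq V] (G : SimpleGraph V) : ℕ :=
  sInf { m | ∃ w, AcqReach G (fun _ => 1) w ∧ AcqMaximal G w ∧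
    m = {v | 0 < w v}.ncard }

/-- The certificate invariant: every vertex `v` owns a set of "source"
vertices of size `w v`, all within distance `log₂ (w v)` of `v`, these sets
are pairwise disjoint, and every weight is at most `Wb`. -/
def AcqInv {V : Type*} [DecidableEq V] (G : SimpleGraph V) (Wb : ℕ) (w : V → ℕ) : Prop :=
  ∃ S : V → Finset V,
    (∀ v, (S v).card = w v) ∧
    (∀ v, ∀ x ∈ S v, ∃ p : G.Walk v x, p.length ≤ Nat.clog 2 (w v)) ∧
    (∀ a b, a ≠ b → Disjoint (S a) (S b)) ∧
    (∀ v, w v ≤ Wb)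

lemma acqInv_step {V : Type*} [Fintype V] [DecidableEq V] {G : SimpleGraph V}
    {D Wb : ℕ} (hDW : D ≤ Wb)
    (hball : ∀ v : V,
      {u : V | ∃ p : G.Walk v u, p.length ≤ Nat.clog 2 Wb + 1}.ncard ≤ D)
    {w w' : V → ℕ} (hm : AcqMove G w w') (hI : AcqInv G Wb w) : AcqInv G Wb w' := by
  classical
  obtain ⟨u, v, hadj, hu, huv, rfl⟩ := hm
  obtain ⟨S, hcard, hwalk, hdisj, hW⟩ := hI
  have hne : u ≠ v := hadj.ne
  have hvpos : 0 < w v := lt_of_lt_of_le hu huv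
  -- key clog facts
  have hA : Nat.clog 2 (w v) ≤ Nat.clog 2 (w v + w u) :=
    Nat.clog_mono_right 2 (Nat.le_add_right _ _)
  have hBpow : 2 ^ Nat.clog 2 (w u) < w v + w u := by
    rcases Nat.lt_or_ge (w u) 2 with h | h
    · have h1 : w u = 1 := by omega
      rw [h1, Nat.clog_one_right]
      omega
    · have hcp : 0 < Nat.clog 2 (w u) := Nat.clog_pos one_lt_two h
      have hlt : 2 ^ (Nat.clog 2 (w u)).pred < w u :=
        Nat.pow_pred_clog_lt_self one_lt_two h
      obtain ⟨k, hk⟩ := Nat.exists_eq_succ_of_ne_zero hcp.ne'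
      rw [hk] at hlt ⊢
      simp only [Nat.pred_succ] at hlt
      rw [pow_succ]
      omega
  have hB : Nat.clog 2 (w u) + 1 ≤ Nat.clog 2 (w v + w u) :=
    (Nat.lt_clog_iff_pow_lt one_lt_two).mpr hBpow
  have hdisjuv : Disjoint (S v) (S u) := hdisj v u (Ne.symm hne)
  -- walks for the merged set
  have hwalk' : ∀ x ∈ S v ∪ S u, ∃ p : G.Walk v x,
      p.length ≤ Nat.clog 2 (w v + w u) := by
    intro x hx
    rcases Finset.mem_union.mp hx with hx | hx
    · obtain ⟨p, hp⟩ := hwalk v x hx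
      exact ⟨p, le_trans hp hA⟩
    · obtain ⟨p, hp⟩ := hwalk u x hx
      exact ⟨SimpleGraph.Walk.cons hadj.symm p, by
        rw [SimpleGraph.Walk.length_cons]; omega⟩
  -- the new merged weight is at most Wb
  have hclogle : Nat.clog 2 (w v + w u) ≤ Nat.clog 2 Wb + 1 := by
    apply (Nat.clog_le_iff_le_pow one_lt_two).mpr
    have h1 : w v ≤ 2 ^ Nat.clog 2 Wb :=
      le_trans (hW v) (Nat.le_pow_clog one_lt_two _)
    have h2 : w u ≤ 2 ^ Nat.clog 2 Wb :=
      le_trans (hW u) (Nat.le_pow_clog one_lt_two _)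
    have h3 : (2 : ℕ) ^ (Nat.clog 2 Wb + 1) = 2 ^ Nat.clog 2 Wb * 2 := pow_succ 2 _
    omega
  have hvW : w v + w u ≤ Wb := by
    have hsub : (↑(S v ∪ S u) : Set V) ⊆
        {x : V | ∃ p : G.Walk v x, p.length ≤ Nat.clog 2 Wb + 1} := by
      intro x hx
      obtain ⟨p, hp⟩ := hwalk' x hx
      exact ⟨p, le_trans hp hclogle⟩
    calc w v + w u = (S v ∪ S u).card := by
          rw [Finset.card_union_of_disjoint hdisjuv, hcard, hcard]
      _ = (↑(S v ∪ S u) : Set V).ncard := (Set.ncard_coe_finset _).symm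
      _ ≤ {x : V | ∃ p : G.Walk v x, p.length ≤ Nat.clog 2 Wb + 1}.ncard :=
          Set.ncard_le_ncard hsub (Set.toFinite _)
      _ ≤ D := hball v
      _ ≤ Wb := hDW
  set S' := Function.update (Function.update S v (S v ∪ S u)) u ∅ with hS'
  set wfun := Function.update (Function.update w v (w v + w u)) u 0 with hwfun
  have hS'u : S' u = ∅ := Function.update_self _ _ _
  have hS'v : S' v = S v ∪ S u := by
    rw [hS', Function.update_of_ne (Ne.symm hne), Function.update_self]
  have hS'x : ∀ x, x ≠ u → x ≠ v → S' x = S x := fun x hxu hxv => by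
    rw [hS', Function.update_of_ne hxu, Function.update_of_ne hxv]
  have hwu : wfun u = 0 := Function.update_self _ _ _
  have hwv : wfun v = w v + w u := by
    rw [hwfun, Function.update_of_ne (Ne.symm hne), Function.update_self]
  have hwx : ∀ x, x ≠ u → x ≠ v → wfun x = w x := fun x hxu hxv => by
    rw [hwfun, Function.update_of_ne hxu, Function.update_of_ne hxv]
  refine ⟨S', ?_, ?_, ?_, ?_⟩
  · intro x
    rcases eq_or_ne x u with rfl | hxu
    · rw [hS'u, hwu, Finset.card_empty]
    · rcases eq_or_ne x v with rfl | hxv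
      · rw [hS'v, hwv, Finset.card_union_of_disjoint hdisjuv, hcard, hcard]
      · rw [hS'x x hxu hxv, hwx x hxu hxv, hcard]
  · intro x t ht
    rcases eq_or_ne x u with rfl | hxu
    · rw [hS'u] at ht
      exact absurd ht (Finset.notMem_empty t)
    · rcases eq_or_ne x v with rfl | hxv
      · rw [hS'v] at ht
        rw [hwv]
        exact hwalk' t ht
      · rw [hS'x x hxu hxv] at ht
        rw [hwx x hxu hxv]
        exact hwalk x t ht
  · intro a b hab
    by_cases hau : a = u
    · rw [hau, hS'u]; exact Finset.disjoint_empty_left _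
    · by_cases hbu : b = u
      · rw [hbu, hS'u]; exact Finset.disjoint_empty_right _
      · by_cases hav : a = v
        · by_cases hbv : b = v
          · exact absurd (hav.trans hbv.symm) hab
          · rw [hav, hS'v, hS'x b hbu hbv]
            exact Finset.disjoint_union_left.mpr
              ⟨hdisj v b (fun h => hbv h.symm), hdisj u b (fun h => hbu h.symm)⟩
        · by_cases hbv : b = v
          · rw [hbv, hS'v, hS'x a hau hav]
            exact (Finset.disjoint_union_left.mpr
              ⟨hdisj v a (fun h => hav h.symm), hdisj u a (fun h => hau h.symm)⟩).symm
          · rw [hS'x a hau hav, hS'x b hbu hbv]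
            exact hdisj a b hab
  · intro x
    rcases eq_or_ne x u with rfl | hxu
    · rw [hwu]; exact Nat.zero_le _
    · rcases eq_or_ne x v with rfl | hxv
      · rw [hwv]; exact hvW
      · rw [hwx x hxu hxv]; exact hW x

lemma acqInv_reach {V : Type*} [Fintype V] [DecidableEq V] {G : SimpleGraph V}
    {D Wb : ℕ} (hDW : D ≤ Wb) (hW1 : 1 ≤ Wb)
    (hball : ∀ v : V,
      {u : V | ∃ p : G.Walk v u, p.length ≤ Nat.clog 2 Wb + 1}.ncard ≤ D)
    {w : V → ℕ} (hr : AcqReach G (fun _ => 1) w) : AcqInv G Wb w := by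
  induction hr with
  | refl =>
    refine ⟨fun v => {v}, by simp, ?_, ?_, fun _ => hW1⟩
    · intro v x hx
      simp only [Finset.mem_singleton] at hx
      subst hx
      exact ⟨SimpleGraph.Walk.nil, by simp⟩
    · intro a b hab
      exact Finset.disjoint_singleton.mpr hab
  | tail _ hmove ih => exact acqInv_step hDW hball hmove ih

lemma acqMove_sum {V : Type*} [Fintype V] [DecidableEq V] {G : SimpleGraph V}
    {w w' : V → ℕ} (h : AcqMove G w w') : ∑ x, w' x = ∑ x, w x := by
  obtain ⟨u, v, hadj, hu, huv, rfl⟩ := h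
  have hne : u ≠ v := hadj.ne
  rw [Finset.sum_update_of_mem (Finset.mem_univ u)]
  have hv : v ∈ Finset.univ \ ({u} : Finset V) := by
    simp [Ne.symm hne]
  rw [Finset.sum_update_of_mem hv]
  have hv' : v ∈ (Finset.univ : Finset V).erase u :=
    Finset.mem_erase.mpr ⟨Ne.symm hne, Finset.mem_univ v⟩
  have e1 : w u + ∑ x ∈ (Finset.univ : Finset V).erase u, w x = ∑ x, w x :=
    Finset.add_sum_erase _ _ (Finset.mem_univ u)
  have e2 : w v + ∑ x ∈ ((Finset.univ : Finset V).erase u).erase v, w x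
      = ∑ x ∈ (Finset.univ : Finset V).erase u, w x :=
    Finset.add_sum_erase _ _ hv'
  rw [Finset.erase_eq, Finset.erase_eq] at e2
  rw [Finset.erase_eq] at e1
  omega

lemma acqReach_sum {V : Type*} [Fintype V] [DecidableEq V] {G : SimpleGraph V}
    {w : V → ℕ} (hr : AcqReach G (fun _ => 1) w) : ∑ x, w x = Fintype.card V := by
  induction hr with
  | refl => simp
  | tail _ hmove ih => rw [acqMove_sum hmove, ih]

lemma acqMove_support {V : Type*} [Fintype V] [DecidableEq V] {G : SimpleGraph V}
    {w w' : V → ℕ} (h : AcqMove G w w') :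
    ∃ u, 0 < w u ∧ (Finset.univ.filter fun v => 0 < w' v)
      = (Finset.univ.filter fun v => 0 < w v).erase u := by
  obtain ⟨u, v, hadj, hu, huv, rfl⟩ := h
  have hne : u ≠ v := hadj.ne
  refine ⟨u, hu, ?_⟩
  ext x
  simp only [Finset.mem_filter, Finset.mem_univ, true_and, Finset.mem_erase]
  rcases eq_or_ne x u with rfl | hxu
  · rw [Function.update_self]
    simp
  · rw [Function.update_of_ne hxu]
    rcases eq_or_ne x v with rfl | hxv
    · rw [Function.update_self]
      constructor
      · intro _; exact ⟨hxu, by omega⟩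
      · intro _; omega
    · rw [Function.update_of_ne hxv]
      exact ⟨fun h => ⟨hxu, h⟩, fun h => h.2⟩

lemma exists_acqMaximal {V : Type*} [Fintype V] [DecidableEq V] (G : SimpleGraph V) :
    ∀ (n : ℕ) (w : V → ℕ), (Finset.univ.filter fun v => 0 < w v).card ≤ n →
      ∃ w', AcqReach G w w' ∧ AcqMaximal G w' := by
  intro n
  induction n with
  | zero =>
    intro w hw
    refine ⟨w, Relation.ReflTransGen.refl, ?_⟩
    intro w' hw'
    obtain ⟨u, v, hadj, hu, _, _⟩ := hw'
    have hmem : u ∈ Finset.univ.filter fun v => 0 < w v := by simp [hu]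
    have := Finset.card_pos.mpr ⟨u, hmem⟩
    omega
  | succ n ih =>
    intro w hw
    by_cases hmax : AcqMaximal G w
    · exact ⟨w, Relation.ReflTransGen.refl, hmax⟩
    · simp only [AcqMaximal, not_forall, not_not] at hmax
      obtain ⟨w2, hm⟩ := hmax
      obtain ⟨u, hu, hsupp⟩ := acqMove_support hm
      have hu' : u ∈ Finset.univ.filter fun v => 0 < w v := by simp [hu]
      have hcard : (Finset.univ.filter fun v => 0 < w2 v).card ≤ n := by
        rw [hsupp, Finset.card_erase_of_mem hu']
        omega
      obtain ⟨w', hr, hmax'⟩ := ih w2 hcard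
      exact ⟨w', Relation.ReflTransGen.head hm hr, hmax'⟩

/-- If every vertex of `G` has at most `D` vertices (including itself) within
graph distance `⌈log₂ W⌉ + 1`, where `W ≥ D`, then every acquisition protocol
leaves a residual set in which every vertex holds weight at most `W`;
consequently `a_t(G) ≥ n / W`, where `n` is the number of vertices. -/
theorem totalAcq_ge_of_small_balls {V : Type*} [Fintype V] [DecidableEq V]
    (G : SimpleGraph V) (D W : ℕ) (hDW : D ≤ W)
    (hball : ∀ v : V,
      {u : V | ∃ p : G.Walk v u, p.length ≤ Nat.clog 2 W + 1}.ncard ≤ D) :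
    (∀ w : V → ℕ, AcqReach G (fun _ => 1) w → AcqMaximal G w →
      ∀ v, w v ≤ W) ∧
    (Fintype.card V : ℝ) / W ≤ totalAcq G := by
  classical
  rcases isEmpty_or_nonempty V with hV | hV
  · constructor
    · intro w _ _ v
      exact isEmptyElim v
    · rw [Fintype.card_eq_zero]
      simp only [Nat.cast_zero, zero_div]
      positivity
  · obtain ⟨v0⟩ := hV
    have hD1 : 1 ≤ D := by
      have h1 := hball v0
      have hmem : v0 ∈ {x : V | ∃ p : G.Walk v0 x, p.length ≤ Nat.clog 2 W + 1} :=
        ⟨SimpleGraph.Walk.nil, by simp⟩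
      have h2 : 0 < {x : V | ∃ p : G.Walk v0 x, p.length ≤ Nat.clog 2 W + 1}.ncard :=
        (Set.ncard_pos (Set.toFinite _)).mpr ⟨v0, hmem⟩
      omega
    have hW1 : 1 ≤ W := le_trans hD1 hDW
    have hbound : ∀ w : V → ℕ, AcqReach G (fun _ => 1) w → ∀ v, w v ≤ W := by
      intro w hr
      exact (acqInv_reach hDW hW1 hball hr).choose_spec.2.2.2
    refine ⟨fun w hr _ v => hbound w hr v, ?_⟩
    have hne : { m | ∃ w, AcqReach G (fun _ => 1) w ∧ AcqMaximal G w ∧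
        m = {v | 0 < w v}.ncard }.Nonempty := by
      obtain ⟨w', hr, hmax⟩ := exists_acqMaximal G
        (Finset.univ.filter fun v => 0 < (1 : ℕ)).card (fun _ => 1) le_rfl
      exact ⟨_, w', hr, hmax, rfl⟩
    obtain ⟨w, hr, hmax, hm⟩ := Nat.sInf_mem hne
    have hsum : ∑ x, w x = Fintype.card V := acqReach_sum hr
    have hcardle : Fintype.card V ≤ W * (Finset.univ.filter fun v => 0 < w v).card := by
      calc Fintype.card V = ∑ x, w x := hsum.symm
        _ = ∑ x ∈ Finset.univ.filter fun v => 0 < w v, w x :=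
            (Finset.sum_filter_of_ne (fun x _ hx => Nat.pos_of_ne_zero hx)).symm
        _ ≤ ∑ _x ∈ Finset.univ.filter fun v => 0 < w v, W :=
            Finset.sum_le_sum (fun x _ => hbound w hr x)
        _ = W * (Finset.univ.filter fun v => 0 < w v).card := by
            rw [Finset.sum_const, smul_eq_mul, mul_comm]
    have hncard : {v | 0 < w v}.ncard = (Finset.univ.filter fun v => 0 < w v).card := by
      rw [← Set.ncard_coe_finset]
      congr 1
      ext x
      simp
    rw [show totalAcq G = {v | 0 < w v}.ncard from hm, hncard]
    rw [div_le_iff₀ (by exact_mod_cast hW1 : (0:ℝ) < W)]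
    exact_mod_cast le_trans hcardle (le_of_eq (mul_comm _ _))
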